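/- There is no twice differentiable function φ : [0, ∞) → ℝ with φ(0) = 0, φ'(0) > 0, φ(r) > 0 for all r > 0, satisfying φ(r)² + φ'(r)² + 2φ(r)φ''(r) = 1 for all r > 0. -/

import Mathlib

open Set Filter Real

/-- A function continuous on `[0,∞)` with vanishing derivative on `(0,∞)` is constant. -/
lemma const_on_Ici_aux {f : ℝ → ℝ} (hc : ContinuousOn f (Set.Ici 0))
    (hd : ∀ r : ℝ, 0 < r → HasDerivAt f 0 r) :
    ∀ b : ℝ, 0 ≤ b → f b = f 0 := by
  intro b hb
  rcases hb.eq_or_lt with h | h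
  · rw [← h]
  · have key : ∀ a ∈ Set.Ioc (0:ℝ) b, f b = f a := by
      intro a ha
      have hcont : ContinuousOn f (Set.Icc a b) :=
        hc.mono (fun x hx => le_trans ha.1.le hx.1)
      have hderiv : ∀ x ∈ Set.Ico a b, HasDerivWithinAt f 0 (Set.Ici x) x :=
        fun x hx => (hd x (lt_of_lt_of_le ha.1 hx.1)).hasDerivWithinAt
      exact constant_of_has_deriv_right_zero hcont hderiv b ⟨ha.2, le_refl b⟩
    have h1 : Filter.Tendsto f (nhdsWithin 0 (Set.Ioi 0)) (nhds (f 0)) :=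
      ((hc.continuousWithinAt (Set.self_mem_Ici)).tendsto).mono_left
        (nhdsWithin_mono 0 Set.Ioi_subset_Ici_self)
    have h2 : Filter.Tendsto f (nhdsWithin 0 (Set.Ioi 0)) (nhds (f b)) := by
      apply Filter.Tendsto.congr' _ tendsto_const_nhds
      filter_upwards [Ioc_mem_nhdsGT_of_mem ⟨le_refl (0:ℝ), h⟩] with a ha
      exact key a ha
    exact tendsto_nhds_unique h2 h1

/-- There is no twice differentiable `φ : [0, ∞) → ℝ` with `φ(0) = 0`, `φ'(0) > 0`,
`φ > 0` on `(0, ∞)`, satisfying `φ² + (φ')² + 2φφ'' = 1` on `(0, ∞)`. -/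
theorem stmt_9 :
    ¬ ∃ φ φ' φ'' : ℝ → ℝ,
      (∀ r ∈ Set.Ici (0 : ℝ), HasDerivWithinAt φ (φ' r) (Set.Ici 0) r) ∧
      (∀ r ∈ Set.Ici (0 : ℝ), HasDerivWithinAt φ' (φ'' r) (Set.Ici 0) r) ∧
      φ 0 = 0 ∧ 0 < φ' 0 ∧
      (∀ r : ℝ, 0 < r → 0 < φ r) ∧
      (∀ r : ℝ, 0 < r →
        (φ r) ^ 2 + (φ' r) ^ 2 + 2 * (φ r * φ'' r) = 1) := by
  rintro ⟨φ, φ', φ'', hφ, hφ', h0, h0', hpos, hode⟩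
  -- derivatives at interior points
  have hφat : ∀ r : ℝ, 0 < r → HasDerivAt φ (φ' r) r :=
    fun r hr => (hφ r hr.le).hasDerivAt (Ici_mem_nhds hr)
  have hφ'at : ∀ r : ℝ, 0 < r → HasDerivAt φ' (φ'' r) r :=
    fun r hr => (hφ' r hr.le).hasDerivAt (Ici_mem_nhds hr)
  have hφc : ContinuousOn φ (Set.Ici 0) := fun r hr => (hφ r hr).continuousWithinAt
  have hφ'c : ContinuousOn φ' (Set.Ici 0) := fun r hr => (hφ' r hr).continuousWithinAt
  -- First integral F = φ φ'^2 - φ + φ^3/3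
  set F : ℝ → ℝ := fun r => φ r * (φ' r) ^ 2 - φ r + (φ r) ^ 3 / 3 with hFdef
  have hFc : ContinuousOn F (Set.Ici 0) :=
    ((hφc.mul (hφ'c.pow 2)).sub hφc).add ((hφc.pow 3).div_const 3)
  have hFd : ∀ r : ℝ, 0 < r → HasDerivAt F 0 r := by
    intro r hr
    have h1 := ((hφat r hr).mul ((hφ'at r hr).pow 2)).sub (hφat r hr)
    have h2 := ((hφat r hr).pow 3).div_const 3
    have h3 := h1.add h2
    refine h3.congr_deriv (Eq.symm ?_)
    have hth := hode r hr
    simp only [Pi.pow_apply]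
    push_cast
    linear_combination (-(φ' r)) * hth
  have hF0 : ∀ b : ℝ, 0 ≤ b → F b = 0 := by
    intro b hb
    have := const_on_Ici_aux hFc hFd b hb
    simp only [hFdef, h0] at this ⊢
    simpa using this
  -- energy identity: φ'^2 + φ^2/3 = 1 on (0,∞)
  have hen : ∀ r : ℝ, 0 < r → (φ' r) ^ 2 + (φ r) ^ 2 / 3 = 1 := by
    intro r hr
    have hF := hF0 r hr.le
    have hne : φ r ≠ 0 := (hpos r hr).ne'
    have : φ r * ((φ' r) ^ 2 + (φ r) ^ 2 / 3 - 1) = 0 := by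
      simp only [hFdef] at hF; ring_nf; ring_nf at hF; linarith
    rcases mul_eq_zero.1 this with h | h
    · exact absurd h hne
    · linarith
  -- φ'(0) = 1
  have h0'1 : φ' 0 = 1 := by
    have h1 : Filter.Tendsto (fun r => (φ' r) ^ 2 + (φ r) ^ 2 / 3)
        (nhdsWithin 0 (Set.Ioi 0)) (nhds ((φ' 0) ^ 2 + (φ 0) ^ 2 / 3)) := by
      have t1 : Filter.Tendsto φ' (nhdsWithin 0 (Set.Ioi 0)) (nhds (φ' 0)) :=
        ((hφ'c.continuousWithinAt Set.self_mem_Ici).tendsto).mono_left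
          (nhdsWithin_mono 0 Set.Ioi_subset_Ici_self)
      have t2 : Filter.Tendsto φ (nhdsWithin 0 (Set.Ioi 0)) (nhds (φ 0)) :=
        ((hφc.continuousWithinAt Set.self_mem_Ici).tendsto).mono_left
          (nhdsWithin_mono 0 Set.Ioi_subset_Ici_self)
      exact (t1.pow 2).add ((t2.pow 2).div_const 3)
    have h2 : Filter.Tendsto (fun r => (φ' r) ^ 2 + (φ r) ^ 2 / 3)
        (nhdsWithin 0 (Set.Ioi 0)) (nhds 1) := by
      apply Filter.Tendsto.congr' _ tendsto_const_nhds
      filter_upwards [self_mem_nhdsWithin] with a ha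
      exact (hen a ha).symm
    have heq : (φ' 0) ^ 2 + (φ 0) ^ 2 / 3 = 1 := tendsto_nhds_unique h1 h2
    rw [h0] at heq
    nlinarith
  -- φ'' = -φ/3 on (0,∞)
  have hφ''eq : ∀ r : ℝ, 0 < r → φ'' r = -(φ r) / 3 := by
    intro r hr
    have h1 := hode r hr
    have h2 := hen r hr
    have hne : φ r ≠ 0 := (hpos r hr).ne'
    have hz : φ r * (φ'' r + φ r / 3) = 0 := by
      linear_combination (1/2) * h1 - (1/2) * h2
    rcases mul_eq_zero.1 hz with h | h
    · exact absurd h hne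
    · linarith
  -- comparison functions
  have h3 : Real.sqrt 3 ≠ 0 := by positivity
  have h3sq : Real.sqrt 3 ^ 2 = 3 := Real.sq_sqrt (by norm_num)
  set s : ℝ → ℝ := fun r => Real.sqrt 3 * Real.sin (r / Real.sqrt 3) with hsdef
  set c : ℝ → ℝ := fun r => Real.cos (r / Real.sqrt 3) with hcdef
  have hs : ∀ r : ℝ, HasDerivAt s (c r) r := by
    intro r
    have h1 : HasDerivAt (fun x : ℝ => x / Real.sqrt 3) (1 / Real.sqrt 3) r :=
      (hasDerivAt_id r).div_const _
    have h2 := ((Real.hasDerivAt_sin (r / Real.sqrt 3)).comp r h1).const_mul (Real.sqrt 3)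
    refine h2.congr_deriv ?_
    field_simp [hcdef]
    rfl
  have hcd : ∀ r : ℝ, HasDerivAt c (-(s r) / 3) r := by
    intro r
    have h1 : HasDerivAt (fun x : ℝ => x / Real.sqrt 3) (1 / Real.sqrt 3) r :=
      (hasDerivAt_id r).div_const _
    have h2 := (Real.hasDerivAt_cos (r / Real.sqrt 3)).comp r h1
    refine h2.congr_deriv (Eq.symm ?_)
    simp only [hsdef]
    field_simp
    nlinarith [h3sq, Real.sin_le_one (r / Real.sqrt 3)]
  -- energy E
  set E : ℝ → ℝ := fun r => (φ' r - c r) ^ 2 + (φ r - s r) ^ 2 / 3 with hEdef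
  have hEc : ContinuousOn E (Set.Ici 0) := by
    have hsc : Continuous s := by
      simp only [hsdef]; exact continuous_const.mul (Real.continuous_sin.comp (continuous_id.div_const _))
    have hcc : Continuous c := by
      simp only [hcdef]; exact Real.continuous_cos.comp (continuous_id.div_const _)
    exact (((hφ'c.sub hcc.continuousOn).pow 2).add (((hφc.sub hsc.continuousOn).pow 2).div_const 3))
  have hEd : ∀ r : ℝ, 0 < r → HasDerivAt E 0 r := by
    intro r hr
    have h1 := (((hφ'at r hr).sub (hcd r)).pow 2).add
      ((((hφat r hr).sub (hs r)).pow 2).div_const 3)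
    refine h1.congr_deriv (Eq.symm ?_)
    have hpp := hφ''eq r hr
    simp only [Pi.sub_apply, hsdef]
    push_cast
    linear_combination (-2 * (φ' r - c r)) * hpp
  have hE0 : E 0 = 0 := by
    simp only [hEdef, hsdef, hcdef, h0, h0'1]
    norm_num
  -- conclude φ = √3 sin(r/√3), contradiction at r = √3 π
  have hb : (0:ℝ) < Real.sqrt 3 * Real.pi := by positivity
  have hEb : E (Real.sqrt 3 * Real.pi) = 0 := by
    rw [const_on_Ici_aux hEc hEd _ hb.le, hE0]
  have hsb : s (Real.sqrt 3 * Real.pi) = 0 := by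
    simp only [hsdef]
    have harg : Real.sqrt 3 * Real.pi / Real.sqrt 3 = Real.pi := by field_simp
    rw [harg, Real.sin_pi, mul_zero]
  have hφb : φ (Real.sqrt 3 * Real.pi) = 0 := by
    simp only [hEdef, hsb, sub_zero] at hEb
    nlinarith [sq_nonneg (φ' (Real.sqrt 3 * Real.pi) - c (Real.sqrt 3 * Real.pi)),
      sq_nonneg (φ (Real.sqrt 3 * Real.pi))]
  exact absurd hφb (hpos _ hb).ne'
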